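/- Let λ > 0, α ∈ [0,1], x ∈ [0,1], and let θ₀, θ₁ ≥ 0 with θ := θ₀ + θ₁ > 0 satisfy θ = α·λθ/(1+λθ) + (1-α)·(x·λθ₀/(1+λθ₀) + (1-x)·λθ₁/(1+λθ₁)). Then θ ≤ 1 - 1/λ. Moreover, if α = 1 and λ > 1, the unique positive solution of this equation is θ = 1 - 1/λ. -/

import Mathlib

/-- **Total information prevalence is bounded by the SIS prevalence.** For `λ > 0`,
`α ∈ [0,1]`, `x ∈ [0,1]`, and `θ₀, θ₁ ≥ 0` with `θ = θ₀ + θ₁ > 0` satisfying the total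
prevalence steady-state equation, one has `θ ≤ 1 - 1/λ`; moreover, if `α = 1` and `λ > 1`,
then `θ = 1 - 1/λ`. -/
theorem total_prevalence_bound (lam α x θ0 θ1 : ℝ) (hlam : 0 < lam)
    (hα : α ∈ Set.Icc (0 : ℝ) 1) (hx : x ∈ Set.Icc (0 : ℝ) 1)
    (h0 : 0 ≤ θ0) (h1 : 0 ≤ θ1) (hpos : 0 < θ0 + θ1)
    (heq : θ0 + θ1 = α * (lam * (θ0 + θ1) / (1 + lam * (θ0 + θ1))) +
      (1 - α) * (x * (lam * θ0 / (1 + lam * θ0)) + (1 - x) * (lam * θ1 / (1 + lam * θ1)))) :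
    θ0 + θ1 ≤ 1 - 1 / lam ∧ (α = 1 → 1 < lam → θ0 + θ1 = 1 - 1 / lam) := by
  obtain ⟨hα0, hα1⟩ := hα
  obtain ⟨hx0, hx1⟩ := hx
  set θ := θ0 + θ1 with hθ
  have d : 0 < 1 + lam * θ := by positivity
  have d0 : 0 < 1 + lam * θ0 := by positivity
  have d1 : 0 < 1 + lam * θ1 := by positivity
  have f0 : lam * θ0 / (1 + lam * θ0) ≤ lam * θ / (1 + lam * θ) := by
    rw [div_le_div_iff₀ d0 d]; nlinarith
  have f1 : lam * θ1 / (1 + lam * θ1) ≤ lam * θ / (1 + lam * θ) := by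
    rw [div_le_div_iff₀ d1 d]; nlinarith
  have key : θ ≤ lam * θ / (1 + lam * θ) := by
    have h2 : α * (lam * θ / (1 + lam * θ)) +
        (1 - α) * (x * (lam * θ0 / (1 + lam * θ0)) + (1 - x) * (lam * θ1 / (1 + lam * θ1)))
        ≤ α * (lam * θ / (1 + lam * θ)) +
        (1 - α) * (x * (lam * θ / (1 + lam * θ)) + (1 - x) * (lam * θ / (1 + lam * θ))) := by
      nlinarith [mul_nonneg (mul_nonneg (by linarith : (0:ℝ) ≤ 1 - α) hx0)
          (sub_nonneg.2 f0),
        mul_nonneg (mul_nonneg (by linarith : (0:ℝ) ≤ 1 - α) (by linarith : (0:ℝ) ≤ 1 - x))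
          (sub_nonneg.2 f1)]
    calc θ = _ := heq
      _ ≤ _ := h2
      _ = lam * θ / (1 + lam * θ) := by ring
  have key' : θ * (1 + lam * θ) ≤ lam * θ := by
    rw [← le_div_iff₀ d]; exact key
  have hle : 1 + lam * θ ≤ lam := by nlinarith
  constructor
  · rw [show (1 : ℝ) - 1 / lam = (lam - 1) / lam by field_simp, le_div_iff₀ hlam]
    nlinarith
  · intro ha hl
    subst ha
    simp only [sub_self, zero_mul, add_zero, one_mul] at heq
    have hmul : θ * (1 + lam * θ) = lam * θ := by
      field_simp at heq; linear_combination θ * heq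
    have h2 : 1 + lam * θ = lam := by
      have := mul_right_cancel₀ (ne_of_gt hpos) (by linarith [hmul] : (1 + lam * θ) * θ = lam * θ)
      linarith
    rw [show (1 : ℝ) - 1 / lam = (lam - 1) / lam by field_simp, eq_div_iff (ne_of_gt hlam)]
    linarith
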